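/- Abel's identity special case: for all real (or natural) x, y > 0 and n ≥ 0, the sum over s from 0 to n of C(n,s) (x+s)^(s-1) (y+n-s)^(n-s-1) equals (1/x + 1/y)(x+y+n)^(n-1). -/

import Mathlib

open Finset

lemma diff_step (m : ℕ) (f : ℕ → ℝ) :
    ∑ s ∈ range (m + 2), (-1 : ℝ) ^ s * ((m + 1).choose s) * f s
      = ∑ s ∈ range (m + 1), (-1 : ℝ) ^ s * (m.choose s) * (f s - f (s + 1)) := by
  have h1 : ∑ s ∈ range (m + 2), (-1 : ℝ) ^ s * ((m + 1).choose s) * f s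
      = f 0 + ∑ s ∈ range (m + 1), (-1:ℝ) ^ (s+1) * ((m.choose s : ℝ) + (m.choose (s+1))) * f (s+1) := by
    rw [Finset.sum_range_succ' _ (m+1), add_comm]
    congr 1
    · simp
    · apply Finset.sum_congr rfl; intro s _
      rw [Nat.choose_succ_succ]; push_cast; ring
  have h2 : ∑ s ∈ range (m + 1), (-1 : ℝ) ^ s * (m.choose s) * f s
      = f 0 + ∑ s ∈ range (m + 1), (-1:ℝ) ^ (s+1) * (m.choose (s+1)) * f (s+1) := by
    rw [Finset.sum_range_succ' _ m, add_comm]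
    congr 1
    · simp
    · rw [Finset.sum_range_succ]; simp
  simp only [mul_sub, Finset.sum_sub_distrib, h1, h2]
  rw [add_sub_assoc, ← Finset.sum_sub_distrib]
  congr 1
  apply Finset.sum_congr rfl; intro s _; push_cast; ring

lemma fd : ∀ m : ℕ, ∀ k : ℕ, k < m → ∀ x : ℝ,
    ∑ s ∈ range (m + 1), (-1 : ℝ) ^ s * (m.choose s) * (x + s) ^ k = 0 := by
  intro m
  induction m with
  | zero => intro k hk; omega
  | succ m ih =>
    intro k hk x
    rw [show m + 1 + 1 = m + 2 from rfl, diff_step m (fun s => (x + s) ^ k)]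
    have hterm : ∀ s : ℕ, (x + (s:ℝ)) ^ k - (x + ((s+1:ℕ):ℝ)) ^ k
        = -∑ j ∈ range k, (k.choose j : ℝ) * (x + s) ^ j := by
      intro s
      have h3 : (x + ((s+1:ℕ):ℝ)) = (x + s) + 1 := by push_cast; ring
      have hexp : ((x+(s:ℝ))+1)^k = (∑ j ∈ range k, (k.choose j:ℝ) * (x+(s:ℝ))^j) + (x+(s:ℝ))^k := by
        rw [add_pow, Finset.sum_range_succ, Nat.choose_self]
        congr 1
        · apply Finset.sum_congr rfl; intro j _; norm_num; ring
        · norm_num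
      rw [h3, hexp]; ring
    calc ∑ s ∈ range (m + 1), (-1:ℝ) ^ s * (m.choose s) * ((x + s) ^ k - (x + ((s+1:ℕ):ℝ)) ^ k)
        = ∑ s ∈ range (m + 1), ∑ j ∈ range k, -((k.choose j : ℝ) * ((-1:ℝ) ^ s * (m.choose s) * (x + s) ^ j)) := by
          apply Finset.sum_congr rfl; intro s _
          rw [hterm s, mul_neg, Finset.mul_sum, ← Finset.sum_neg_distrib]
          apply Finset.sum_congr rfl; intro j _; ring
      _ = ∑ j ∈ range k, -((k.choose j : ℝ) * ∑ s ∈ range (m + 1), (-1:ℝ) ^ s * (m.choose s) * (x + s) ^ j) := by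
          rw [Finset.sum_comm]
          apply Finset.sum_congr rfl; intro j _
          rw [Finset.mul_sum, ← neg_inj]
          simp only [neg_neg, Finset.sum_neg_distrib]
      _ = 0 := by
          apply Finset.sum_eq_zero; intro j hj
          have hj' := Finset.mem_range.mp hj
          rw [ih j (by omega) x]
          simp

lemma abelB (n : ℕ) : ∀ (x : ℝ), 0 < x → ∀ y : ℝ,
    ∑ s ∈ range (n + 1), (n.choose s : ℝ) * (x + s) ^ ((s : ℤ) - 1) * (y + n - s) ^ (n - s)
      = x⁻¹ * (x + y + n) ^ n := by
  induction n with
  | zero =>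
    intro x hx y
    simp
  | succ n ih =>
    intro x hx y
    set c : ℕ → ℝ := fun s => ((n+1).choose s : ℝ) * (x + s) ^ ((s : ℤ) - 1) with hc
    set F : ℝ → ℝ := fun y => ∑ s ∈ range (n + 2), c s * (y + ((n:ℝ)+1) - s) ^ (n + 1 - s) with hF
    set G : ℝ → ℝ := fun y => x⁻¹ * (x + y + ((n:ℝ)+1)) ^ (n+1) with hG
    -- derivatives
    have hxs : ∀ s : ℕ, (0:ℝ) < x + s := fun s => by positivity
    have hFd : ∀ y : ℝ, HasDerivAt F
        (∑ s ∈ range (n + 2), c s * (((n + 1 - s : ℕ) : ℝ) * (y + ((n:ℝ)+1) - s) ^ (n + 1 - s - 1) * 1)) y := by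
      intro y
      apply HasDerivAt.fun_sum
      intro s _
      exact ((((hasDerivAt_id y).add_const ((n:ℝ)+1)).sub_const (s:ℝ)).pow (n+1-s)).const_mul (c s)
    have hGd : ∀ y : ℝ, HasDerivAt G
        (x⁻¹ * ((((n+1 : ℕ)) : ℝ) * (x + y + ((n:ℝ)+1)) ^ (n + 1 - 1) * 1)) y := by
      intro y
      exact ((((hasDerivAt_id y).const_add x).add_const ((n:ℝ)+1)).pow (n+1)).const_mul x⁻¹
    -- the two derivative values agree
    have hval : ∀ y : ℝ,
        (∑ s ∈ range (n + 2), c s * (((n + 1 - s : ℕ) : ℝ) * (y + ((n:ℝ)+1) - s) ^ (n + 1 - s - 1) * 1))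
          = x⁻¹ * ((((n+1 : ℕ)) : ℝ) * (x + y + ((n:ℝ)+1)) ^ (n + 1 - 1) * 1) := by
      intro y
      have h1 : ∑ s ∈ range (n + 2), c s * (((n + 1 - s : ℕ) : ℝ) * (y + ((n:ℝ)+1) - s) ^ (n + 1 - s - 1) * 1)
          = ∑ s ∈ range (n + 1), ((n:ℝ)+1) * ((n.choose s : ℝ) * (x + s) ^ ((s : ℤ) - 1) * ((y+1) + n - s) ^ (n - s)) := by
        rw [Finset.sum_range_succ]
        simp only [Nat.sub_self, Nat.cast_zero, zero_mul, mul_zero, zero_mul, mul_one, add_zero]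
        apply Finset.sum_congr rfl
        intro s hs
        have hs' : s ≤ n := by simpa [Nat.lt_succ_iff] using hs
        have e1 : n + 1 - s - 1 = n - s := by omega
        have e2 : ((n + 1 - s : ℕ) : ℝ) = (n:ℝ) + 1 - s := by
          push_cast [Nat.cast_sub (by omega : s ≤ n + 1)]; ring
        have e3 : (y + ((n:ℝ)+1) - s) = ((y+1) + n - s) := by ring
        have e4 : ((n+1).choose s : ℝ) * ((n:ℝ) + 1 - s) = ((n:ℝ)+1) * (n.choose s : ℝ) := by
          have := Nat.choose_mul_succ_eq n s
          have h5 : ((n.choose s * (n+1) : ℕ) : ℝ) = (((n+1).choose s * (n+1-s) : ℕ) : ℝ) := by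
            exact_mod_cast congrArg (Nat.cast : ℕ → ℝ) this
          push_cast [Nat.cast_sub (by omega : s ≤ n + 1)] at h5
          linarith [h5]
        rw [e1, e2, e3, hc]
        linear_combination e4 * ((x + (s:ℝ)) ^ ((s : ℤ) - 1) * ((y+1) + (n:ℝ) - s) ^ (n - s))
      rw [h1, ← Finset.mul_sum, ih x hx (y+1)]
      have : x + (y+1) + (n:ℝ) = x + y + ((n:ℝ)+1) := by ring
      rw [this]
      push_cast
      ring
    -- F - G is constant
    have hH : ∀ a b : ℝ, F a - G a = F b - G b := by
      have hd : ∀ y : ℝ, HasDerivAt (fun y => F y - G y) 0 y := by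
        intro y
        have := (hFd y).sub (hGd y)
        rw [hval y, sub_self] at this
        exact this
      intro a b
      exact is_const_of_deriv_eq_zero (fun y => (hd y).differentiableAt)
        (fun y => (hd y).deriv) a b
    -- evaluation at y₀ = -x - (n+1)
    have hF0 : F (-x - ((n:ℝ)+1)) = 0 := by
      rw [hF]
      simp only []
      have h1 : ∀ s ∈ range (n + 2),
          c s * ((-x - ((n:ℝ)+1)) + ((n:ℝ)+1) - s) ^ (n + 1 - s)
            = (-1:ℝ)^(n+1) * ((-1:ℝ)^s * (((n+1).choose s : ℝ)) * (x + s)^n) := by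
        intro s hs
        have hs' : s ≤ n + 1 := by simpa [Nat.lt_succ_iff] using hs
        have e1 : ((-x - ((n:ℝ)+1)) + ((n:ℝ)+1) - s) = -(x + s) := by ring
        rw [e1, neg_pow]
        have e2 : (x + (s:ℝ)) ^ ((s : ℤ) - 1) * (x + s) ^ (n + 1 - s)
            = (x + s) ^ n := by
          rw [← zpow_natCast (x + (s:ℝ)) (n + 1 - s), ← zpow_add₀ (ne_of_gt (hxs s))]
          rw [show ((s : ℤ) - 1) + ((n + 1 - s : ℕ) : ℤ) = (n : ℤ) by
            push_cast [Nat.cast_sub hs']; ring]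
          exact zpow_natCast _ n
        have e3 : (-1:ℝ) ^ (n + 1 - s) = (-1:ℝ)^(n+1) * (-1:ℝ)^s := by
          have : (-1:ℝ) ^ (n + 1 - s) * (-1:ℝ)^s = (-1:ℝ)^(n+1) := by
            rw [← pow_add]; congr 1; omega
          have h2 : ((-1:ℝ)^s) * ((-1:ℝ)^s) = 1 := by
            rw [← pow_add, Even.neg_one_pow ⟨s, by ring⟩]
          linear_combination this * (-1:ℝ)^s - h2 * (-1:ℝ)^(n+1-s)
        rw [hc]
        calc ((n+1).choose s : ℝ) * (x + s) ^ ((s : ℤ) - 1) * ((-1:ℝ) ^ (n + 1 - s) * (x + s) ^ (n + 1 - s))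
            = ((n+1).choose s : ℝ) * (-1:ℝ) ^ (n + 1 - s) * ((x + (s:ℝ)) ^ ((s : ℤ) - 1) * (x + s) ^ (n + 1 - s)) := by ring
          _ = ((n+1).choose s : ℝ) * ((-1:ℝ)^(n+1) * (-1:ℝ)^s) * (x + s) ^ n := by rw [e2, e3]
          _ = (-1:ℝ)^(n+1) * ((-1:ℝ)^s * (((n+1).choose s : ℝ)) * (x + s)^n) := by ring
      rw [Finset.sum_congr rfl h1, ← Finset.mul_sum]
      rw [show n + 2 = (n + 1) + 1 from rfl, fd (n+1) n (by omega) x]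
      ring
    have hG0 : G (-x - ((n:ℝ)+1)) = 0 := by
      rw [hG]
      simp only []
      rw [show x + (-x - ((n:ℝ)+1)) + ((n:ℝ)+1) = 0 by ring]
      rw [zero_pow (by omega : n + 1 ≠ 0)]
      ring
    have hFG : F y = G y := by
      have := hH y (-x - ((n:ℝ)+1))
      rw [hF0, hG0] at this
      linarith [this]
    -- match goal with F, G
    have hL : ∑ s ∈ range (n + 1 + 1), ((n+1).choose s : ℝ) * (x + s) ^ ((s : ℤ) - 1) * (y + ((n+1:ℕ):ℝ) - s) ^ (n + 1 - s) = F y := by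
      rw [hF]
      apply Finset.sum_congr rfl
      intro s _
      rw [hc]
      push_cast
      ring_nf
    rw [hL, hFG, hG]
    push_cast
    ring_nf

/-- **Abel's identity, special case `A_n(x,y;-1,-1)`.** For `x, y > 0` and `n ≥ 0`,
`Σ_{s=0}^n C(n,s) (x+s)^(s-1) (y+n-s)^(n-s-1) = (1/x + 1/y)(x+y+n)^(n-1)`. -/
theorem abel_neg_one_neg_one (n : ℕ) (x y : ℝ) (hx : 0 < x) (hy : 0 < y) :
    ∑ s ∈ Finset.range (n + 1),
        (n.choose s : ℝ) * (x + s) ^ ((s : ℤ) - 1) * (y + n - s) ^ ((n : ℤ) - s - 1)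
      = (x⁻¹ + y⁻¹) * (x + y + n) ^ ((n : ℤ) - 1) := by
  set S : ℝ := x + y + n with hSdef
  have hS : 0 < S := by positivity
  have hb2 : ∀ s : ℕ, s ≤ n → (0:ℝ) < y + n - s := by
    intro s hs
    have : (s:ℝ) ≤ n := by exact_mod_cast hs
    linarith
  have hb1 : ∀ s : ℕ, (0:ℝ) < x + s := fun s => by positivity
  -- key per-term expansion
  have key : ∀ s ∈ range (n+1),
      S * ((n.choose s : ℝ) * (x + s) ^ ((s : ℤ) - 1) * (y + n - s) ^ ((n : ℤ) - s - 1))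
        = (n.choose s : ℝ) * (x + s) ^ s * (y + n - s) ^ ((n : ℤ) - s - 1)
          + (n.choose s : ℝ) * (x + s) ^ ((s : ℤ) - 1) * (y + n - s) ^ (n - s) := by
    intro s hs
    have hs' : s ≤ n := by simpa [Nat.lt_succ_iff] using hs
    have h1 : (x + (s:ℝ)) ^ ((s : ℤ) - 1) * (x + s) = (x + s) ^ s := by
      rw [← zpow_add_one₀ (ne_of_gt (hb1 s)), sub_add_cancel, zpow_natCast]
    have h2 : (y + (n:ℝ) - s) ^ ((n : ℤ) - s - 1) * (y + n - s) = (y + n - s) ^ (n - s) := by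
      rw [← zpow_add_one₀ (ne_of_gt (hb2 s hs')), sub_add_cancel,
        show ((n:ℤ) - s) = ((n - s : ℕ) : ℤ) by push_cast [Nat.cast_sub hs']; ring,
        zpow_natCast]
    have hsplit : S = (x + s) + (y + n - s) := by rw [hSdef]; ring
    calc S * ((n.choose s : ℝ) * (x + s) ^ ((s : ℤ) - 1) * (y + n - s) ^ ((n : ℤ) - s - 1))
        = (n.choose s : ℝ) * ((x + (s:ℝ)) ^ ((s : ℤ) - 1) * (x + s)) * (y + n - s) ^ ((n : ℤ) - s - 1)
          + (n.choose s : ℝ) * (x + s) ^ ((s : ℤ) - 1) * ((y + (n:ℝ) - s) ^ ((n : ℤ) - s - 1) * (y + n - s)) := by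
            rw [hsplit]; ring
      _ = _ := by rw [h1, h2]
  have hmul : S * (∑ s ∈ range (n + 1),
      (n.choose s : ℝ) * (x + s) ^ ((s : ℤ) - 1) * (y + n - s) ^ ((n : ℤ) - s - 1))
      = (∑ s ∈ range (n+1), (n.choose s : ℝ) * (x + s) ^ s * (y + n - s) ^ ((n : ℤ) - s - 1))
        + (∑ s ∈ range (n+1), (n.choose s : ℝ) * (x + s) ^ ((s : ℤ) - 1) * (y + n - s) ^ (n - s)) := by
    rw [Finset.mul_sum, Finset.sum_congr rfl key, Finset.sum_add_distrib]
  -- second sum by abelB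
  have hA2 : (∑ s ∈ range (n+1), (n.choose s : ℝ) * (x + s) ^ ((s : ℤ) - 1) * (y + n - s) ^ (n - s))
      = x⁻¹ * S ^ n := abelB n x hx y
  -- first sum by abelB with roles swapped, reflected
  have hA1 : (∑ s ∈ range (n+1), (n.choose s : ℝ) * (x + s) ^ s * (y + n - s) ^ ((n : ℤ) - s - 1))
      = y⁻¹ * S ^ n := by
    have hswap := abelB n y hy x
    have hrefl := Finset.sum_range_reflect
      (fun s => (n.choose s : ℝ) * (y + s) ^ ((s : ℤ) - 1) * (x + n - s) ^ (n - s)) (n+1)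
    rw [← hrefl] at hswap
    have hyx : y + x + (n:ℝ) = S := by rw [hSdef]; ring
    rw [hyx] at hswap
    rw [← hswap]
    apply Finset.sum_congr rfl
    intro s hs
    have hs' : s ≤ n := by simpa [Nat.lt_succ_iff] using hs
    rw [show n + 1 - 1 - s = n - s by omega]
    rw [Nat.choose_symm hs', Nat.sub_sub_self hs']
    push_cast [Nat.cast_sub hs']
    rw [show x + (n:ℝ) - ((n:ℝ) - s) = x + (s:ℝ) by ring,
      show y + ((n:ℝ) - s) = y + (n:ℝ) - s by ring]
    ring
  rw [hA1, hA2] at hmul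
  have hzp : S ^ ((n : ℤ) - 1) = S ^ n * S⁻¹ := by
    rw [show (n : ℤ) - 1 = (n : ℤ) + (-1) by ring, zpow_add₀ (ne_of_gt hS), zpow_natCast,
      zpow_neg_one]
  rw [hzp]
  have hSne := ne_of_gt hS
  field_simp at hmul ⊢
  linarith [hmul]
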